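/- For every n ≥ 1, x ≥ 0 and t ≥ 0, the n-th derivative of the Riccati flow in the initial condition satisfies |∂ⁿφ_t(x)/∂xⁿ| ≤ n!·ϖ²·|ϖ₋|^{−(n−1)}·e^{−λt}, where ϖ = 1 − ϖ₊/ϖ₋. Explicitly, ∂ⁿφ_t(x)/∂xⁿ = n!(−1)^{n+1}(ϖ₊ − ϖ₋)²(1 − e^{−λt})^{n−1}e^{−λt} / (e^{−λt}(ϖ₊ − ϖ₋) + (1 − e^{−λt})(x − ϖ₋))^{n+1}. -/

import Mathlib

noncomputable def lam (A R S : ℝ) : ℝ := 2 * Real.sqrt (A ^ 2 + R * S)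

noncomputable def wplus (A R S : ℝ) : ℝ := (A + lam A R S / 2) / S

noncomputable def wminus (A R S : ℝ) : ℝ := (A - lam A R S / 2) / S

/-- The closed-form Riccati semigroup `φ_t(x)`. -/
noncomputable def phi (A R S t x : ℝ) : ℝ :=
  wplus A R S +
    (x - wplus A R S) * ((wplus A R S - wminus A R S) * Real.exp (-(lam A R S) * t)) /
      ((wplus A R S - wminus A R S) * Real.exp (-(lam A R S) * t) +
        (x - wminus A R S) * (1 - Real.exp (-(lam A R S) * t)))

/-- `ϖ = 1 - ϖ₊/ϖ₋`. -/
noncomputable def vpi (A R S : ℝ) : ℝ := 1 - wplus A R S / wminus A R S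

lemma riccati_aux (wp wm E : ℝ) : ∀ n : ℕ, 1 ≤ n → ∀ x : ℝ,
    0 < (wp - wm) * E + (x - wm) * (1 - E) →
    iteratedDeriv n (fun y => wp + (y - wp) * ((wp - wm) * E) /
        ((wp - wm) * E + (y - wm) * (1 - E))) x =
      (n.factorial : ℝ) * (-1) ^ (n + 1) *
        ((wp - wm) ^ 2 * (1 - E) ^ (n - 1) * E) /
          (E * (wp - wm) + (1 - E) * (x - wm)) ^ (n + 1) := by
  refine Nat.le_induction ?_ ?_
  · -- base case n = 1
    intro x hg
    have hgne : (wp - wm) * E + (x - wm) * (1 - E) ≠ 0 := ne_of_gt hg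
    rw [iteratedDeriv_one]
    have hnum : HasDerivAt (fun y : ℝ => (y - wp) * ((wp - wm) * E)) ((wp - wm) * E) x := by
      simpa using ((hasDerivAt_id x).sub_const wp).mul_const ((wp - wm) * E)
    have hden : HasDerivAt (fun y : ℝ => (wp - wm) * E + (y - wm) * (1 - E)) (1 - E) x := by
      simpa using (((hasDerivAt_id x).sub_const wm).mul_const (1 - E)).const_add ((wp - wm) * E)
    have hdiv : HasDerivAt (fun y => wp + (y - wp) * ((wp - wm) * E) /
        ((wp - wm) * E + (y - wm) * (1 - E))) _ x := (hnum.div hden hgne).const_add wp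
    rw [hdiv.deriv]
    have h2 : E * (wp - wm) + (1 - E) * (x - wm) = (wp - wm) * E + (x - wm) * (1 - E) := by ring
    rw [h2]
    simp only [Nat.factorial_one, Nat.cast_one, pow_zero]
    field_simp
    ring
  · -- inductive step
    intro n hn IH x hg
    have hgne : (wp - wm) * E + (x - wm) * (1 - E) ≠ 0 := ne_of_gt hg
    rw [iteratedDeriv_succ]
    have hopen : IsOpen {y : ℝ | 0 < (wp - wm) * E + (y - wm) * (1 - E)} := by
      apply isOpen_lt continuous_const
      fun_prop
    have hmem : {y : ℝ | 0 < (wp - wm) * E + (y - wm) * (1 - E)} ∈ nhds x :=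
      hopen.mem_nhds hg
    have heq : iteratedDeriv n (fun y => wp + (y - wp) * ((wp - wm) * E) /
        ((wp - wm) * E + (y - wm) * (1 - E))) =ᶠ[nhds x]
        (fun y => (n.factorial : ℝ) * (-1) ^ (n + 1) *
          ((wp - wm) ^ 2 * (1 - E) ^ (n - 1) * E) /
          (E * (wp - wm) + (1 - E) * (y - wm)) ^ (n + 1)) :=
      Filter.eventuallyEq_of_mem hmem (fun y hy => IH y hy)
    rw [heq.deriv_eq]
    -- derivative of K / g^(n+1)
    set K : ℝ := (n.factorial : ℝ) * (-1) ^ (n + 1) * ((wp - wm) ^ 2 * (1 - E) ^ (n - 1) * E) with hK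
    have hg' : E * (wp - wm) + (1 - E) * (x - wm) = (wp - wm) * E + (x - wm) * (1 - E) := by ring
    have hgne2 : E * (wp - wm) + (1 - E) * (x - wm) ≠ 0 := by rw [hg']; exact hgne
    have hgd : HasDerivAt (fun y : ℝ => E * (wp - wm) + (1 - E) * (y - wm)) (1 - E) x := by
      simpa using (((hasDerivAt_id x).sub_const wm).const_mul (1 - E)).const_add (E * (wp - wm))
    have hpow : HasDerivAt (fun y : ℝ => (E * (wp - wm) + (1 - E) * (y - wm)) ^ (n + 1))
        ((n + 1 : ℕ) * (E * (wp - wm) + (1 - E) * (x - wm)) ^ n * (1 - E)) x := hgd.pow (n + 1)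
    have hpowne : (E * (wp - wm) + (1 - E) * (x - wm)) ^ (n + 1) ≠ 0 := pow_ne_zero _ hgne2
    have hdiv : HasDerivAt (fun y => K / (E * (wp - wm) + (1 - E) * (y - wm)) ^ (n + 1)) _ x :=
      (hasDerivAt_const x K).div hpow hpowne
    rw [hdiv.deriv]
    have hc : (1 - E) ^ (n - 1) * (1 - E) = (1 - E) ^ n := by
      rw [← pow_succ, Nat.sub_add_cancel hn]
    have hfac : ((n + 1).factorial : ℝ) = (n + 1) * n.factorial := by
      rw [Nat.factorial_succ]; push_cast; ring
    have hnsub : n + 1 - 1 = n := rfl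
    rw [hnsub, hfac, hK]
    set G : ℝ := E * (wp - wm) + (1 - E) * (x - wm) with hGdef
    have hGpos : 0 < G := by rw [hg']; exact hg
    have hGne : G ≠ 0 := ne_of_gt hGpos
    field_simp
    rw [← hc]
    push_cast
    ring

theorem riccati_flow_nth_derivative (A R S : ℝ) (hR : 0 < R) (hS : 0 < S)
    (n : ℕ) (hn : 1 ≤ n) (t x : ℝ) (ht : 0 ≤ t) (hx : 0 ≤ x) :
    iteratedDeriv n (fun y => phi A R S t y) x =
      (n.factorial : ℝ) * (-1) ^ (n + 1) *
        ((wplus A R S - wminus A R S) ^ 2 *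
            (1 - Real.exp (-(lam A R S) * t)) ^ (n - 1) * Real.exp (-(lam A R S) * t)) /
          (Real.exp (-(lam A R S) * t) * (wplus A R S - wminus A R S) +
              (1 - Real.exp (-(lam A R S) * t)) * (x - wminus A R S)) ^ (n + 1) ∧
    |iteratedDeriv n (fun y => phi A R S t y) x| ≤
      (n.factorial : ℝ) * vpi A R S ^ 2 / |wminus A R S| ^ (n - 1) *
        Real.exp (-(lam A R S) * t) := by
  set E : ℝ := Real.exp (-(lam A R S) * t) with hEdef
  set wp : ℝ := wplus A R S with hwpdef
  set wm : ℝ := wminus A R S with hwmdef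
  -- basic facts
  have hsq : Real.sqrt (A ^ 2 + R * S) > |A| := by
    rw [← Real.sqrt_sq_eq_abs]
    exact Real.sqrt_lt_sqrt (sq_nonneg A) (by nlinarith)
  have hlam : 0 < lam A R S := by
    rw [lam]
    have := abs_nonneg A
    nlinarith
  have hwp : 0 < wp := by
    rw [hwpdef, wplus, lam]
    apply div_pos _ hS
    have h1 : -A ≤ |A| := neg_le_abs A
    nlinarith
  have hwm : wm < 0 := by
    rw [hwmdef, wminus, lam]
    apply div_neg_of_neg_of_pos _ hS
    have h1 : A ≤ |A| := le_abs_self A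
    nlinarith
  have hD : 0 < wp - wm := by linarith
  have hE0 : 0 < E := Real.exp_pos _
  have hE1 : E ≤ 1 := Real.exp_le_one_iff.mpr (by nlinarith)
  have hc0 : 0 ≤ 1 - E := by linarith
  have hxm : -wm ≤ x - wm := by linarith
  have hg : 0 < (wp - wm) * E + (x - wm) * (1 - E) := by
    have h1 : 0 < (wp - wm) * E := mul_pos hD hE0
    have h2 : 0 ≤ (x - wm) * (1 - E) := mul_nonneg (by linarith) hc0
    linarith
  have hfun : (fun y => phi A R S t y) = (fun y => wp + (y - wp) * ((wp - wm) * E) /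
      ((wp - wm) * E + (y - wm) * (1 - E))) := by
    funext y
    rw [phi]
  have hform := riccati_aux wp wm E n hn x hg
  rw [hfun]
  refine ⟨hform, ?_⟩
  rw [hform]
  -- now the bound
  set G : ℝ := E * (wp - wm) + (1 - E) * (x - wm) with hGdef
  have hGpos : 0 < G := by rw [hGdef]; nlinarith [mul_pos hD hE0, mul_nonneg hc0 (by linarith : (0:ℝ) ≤ x - wm)]
  -- |formula| = n! * D^2 * c^(n-1) * E / G^(n+1)
  have habs : |(n.factorial : ℝ) * (-1) ^ (n + 1) *
        ((wp - wm) ^ 2 * (1 - E) ^ (n - 1) * E) / G ^ (n + 1)| =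
      (n.factorial : ℝ) * ((wp - wm) ^ 2 * (1 - E) ^ (n - 1) * E) / G ^ (n + 1) := by
    rw [abs_div, abs_mul, abs_mul, abs_pow, abs_neg, abs_one, one_pow, mul_one,
      abs_pow, abs_of_pos hGpos, Nat.abs_cast,
      abs_of_nonneg (by positivity : (0:ℝ) ≤ (wp - wm) ^ 2 * (1 - E) ^ (n - 1) * E)]
  rw [habs]
  -- key: G ≥ -wm and (1-E)^(n-1) ≤ 1
  have hGm : -wm ≤ G := by
    rw [hGdef]
    have h1 := mul_le_mul_of_nonneg_left hxm hc0
    have h2 := mul_le_mul_of_nonneg_left (show -wm ≤ wp - wm by linarith) hE0.le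
    nlinarith
  have hwmpos : 0 < -wm := by linarith
  have hGpow : (-wm) ^ (n + 1) ≤ G ^ (n + 1) := pow_le_pow_left₀ hwmpos.le hGm _
  have hcpow : (1 - E) ^ (n - 1) ≤ 1 := pow_le_one₀ hc0 (by linarith)
  -- rhs equals n! * (wp-wm)^2 * E / (-wm)^(n+1)
  have hvpi : vpi A R S = (wp - wm) / (-wm) := by
    have hwmne : wm ≠ 0 := ne_of_lt hwm
    rw [vpi, ← hwpdef, ← hwmdef]
    field_simp
    ring
  have habsm : |wm| = -wm := abs_of_neg hwm
  have hrhs : (n.factorial : ℝ) * vpi A R S ^ 2 / |wm| ^ (n - 1) * E =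
      (n.factorial : ℝ) * ((wp - wm) ^ 2 * E) / (-wm) ^ (n + 1) := by
    rw [hvpi, habsm, div_pow]
    have h1 : (-wm) ^ (n + 1) = (-wm) ^ 2 * (-wm) ^ (n - 1) := by
      rw [← pow_add]
      congr 1
      omega
    rw [h1]
    field_simp
  rw [hrhs]
  rw [div_le_div_iff₀ (by positivity) (by positivity)]
  have hfac : (0:ℝ) ≤ (n.factorial : ℝ) := Nat.cast_nonneg _
  calc (n.factorial : ℝ) * ((wp - wm) ^ 2 * (1 - E) ^ (n - 1) * E) * (-wm) ^ (n + 1)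
      ≤ (n.factorial : ℝ) * ((wp - wm) ^ 2 * 1 * E) * G ^ (n + 1) := by
        apply mul_le_mul
        · apply mul_le_mul_of_nonneg_left _ hfac
          apply mul_le_mul_of_nonneg_right _ hE0.le
          exact mul_le_mul_of_nonneg_left hcpow (by positivity)
        · exact hGpow
        · positivity
        · positivity
    _ = (n.factorial : ℝ) * ((wp - wm) ^ 2 * E) * G ^ (n + 1) := by ring
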